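/- arXiv:1409.4662 — 2 statements merged into one kernel-verified Lean document; each statement's English description precedes it below -/
import Mathlib

section
/- Let C be a nonempty closed convex subset of a real Hilbert space H, A : C → H an α-inverse strongly monotone mapping with α > 0, λ ∈ (0, 2α), and p ∈ C with P_C(p − λAp) = p. Then for any u ∈ C and z = P_C(u − λAu): ‖z − p‖² ≤ ‖u − p‖² − ‖u − z‖² + 2λ‖u − z‖‖Au − Ap‖. -/
lemma proj_var_ineq {H : Type*} [NormedAddCommGroup H] [InnerProductSpace ℝ H]
    (C : Set H) (hconv : Convex ℝ C)
    (P : H → H) (hPmem : ∀ x, P x ∈ C)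
    (hPmin : ∀ x, ∀ z ∈ C, ‖x - P x‖ ≤ ‖x - z‖)
    (x w : H) (hw : w ∈ C) : (inner ℝ (x - P x) (w - P x) : ℝ) ≤ 0 := by
  set q := P x with hq
  have key : ∀ t : ℝ, 0 < t → t ≤ 1 → 2 * (inner ℝ (x - q) (w - q) : ℝ) ≤ t * ‖w - q‖ ^ 2 := by
    intro t ht ht1
    have hy : q + t • (w - q) ∈ C := by
      have := hconv (hPmem x) hw (by linarith : (0:ℝ) ≤ 1 - t) ht.le (by ring)
      convert this using 1
      rw [smul_sub]
      module
    have h1 : ‖x - q‖ ≤ ‖x - (q + t • (w - q))‖ := hPmin x _ hy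
    have h2 : ‖x - q‖ ^ 2 ≤ ‖x - (q + t • (w - q))‖ ^ 2 :=
      pow_le_pow_left₀ (norm_nonneg _) h1 2
    have h3 : ‖x - (q + t • (w - q))‖ ^ 2
        = ‖x - q‖ ^ 2 - 2 * t * (inner ℝ (x - q) (w - q) : ℝ) + t ^ 2 * ‖w - q‖ ^ 2 := by
      have e : x - (q + t • (w - q)) = (x - q) - t • (w - q) := by abel
      rw [e, norm_sub_sq_real, real_inner_smul_right, norm_smul]
      simp [mul_pow]
      ring
    rw [h3] at h2
    nlinarith
  by_contra hcon
  push_neg at hcon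
  set a := (inner ℝ (x - q) (w - q) : ℝ)
  set b := ‖w - q‖ ^ 2 with hb
  have hb0 : 0 ≤ b := by positivity
  rcases eq_or_lt_of_le hb0 with hb1 | hb1
  · have := key 1 one_pos le_rfl
    nlinarith
  · have ht : 0 < min 1 (a / b) := lt_min one_pos (div_pos hcon hb1)
    have hk := key _ ht (min_le_left _ _)
    have h4 : min 1 (a / b) * b ≤ (a / b) * b :=
      mul_le_mul_of_nonneg_right (min_le_right _ _) hb0
    rw [div_mul_cancel₀ _ (ne_of_gt hb1)] at h4
    nlinarith

theorem stmt_8 {H : Type*} [NormedAddCommGroup H] [InnerProductSpace ℝ H]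
    (C : Set H) (hC : C.Nonempty) (hclosed : IsClosed C) (hconv : Convex ℝ C)
    (P : H → H) (hPmem : ∀ x, P x ∈ C)
    (hPmin : ∀ x, ∀ z ∈ C, ‖x - P x‖ ≤ ‖x - z‖)
    (A : H → H) (α : ℝ) (hα : 0 < α)
    (hA : ∀ x ∈ C, ∀ y ∈ C, (inner ℝ (A x - A y) (x - y) : ℝ) ≥ α * ‖A x - A y‖ ^ 2)
    (lam : ℝ) (hlam : lam ∈ Set.Ioo (0 : ℝ) (2 * α))
    (p : H) (hpC : p ∈ C) (hp : P (p - lam • A p) = p)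
    (u : H) (huC : u ∈ C) (z : H) (hz : z = P (u - lam • A u)) :
    ‖z - p‖ ^ 2 ≤ ‖u - p‖ ^ 2 - ‖u - z‖ ^ 2 + 2 * lam * ‖u - z‖ * ‖A u - A p‖ := by
  obtain ⟨hl0, hl2⟩ := hlam
  have hzC : z ∈ C := hz ▸ hPmem _
  have h1 : (inner ℝ ((u - lam • A u) - z) (p - z) : ℝ) ≤ 0 := by
    have := proj_var_ineq C hconv P hPmem hPmin (u - lam • A u) p hpC
    rwa [← hz] at this
  have h2 : (inner ℝ ((p - lam • A p) - p) (z - p) : ℝ) ≤ 0 := by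
    have := proj_var_ineq C hconv P hPmem hPmin (p - lam • A p) z hzC
    rwa [hp] at this
  have h3 : (inner ℝ (A u - A p) (u - p) : ℝ) ≥ α * ‖A u - A p‖ ^ 2 := hA u huC p hpC
  have h4 : (inner ℝ (A u - A p) (u - z) : ℝ) ≤ ‖A u - A p‖ * ‖u - z‖ :=
    real_inner_le_norm _ _
  have hexp : ‖z - p‖ ^ 2 = ‖u - p‖ ^ 2 - 2 * (inner ℝ (u - p) (u - z) : ℝ) + ‖u - z‖ ^ 2 := by
    rw [show z - p = (u - p) - (u - z) by abel, norm_sub_sq_real]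
  have h2' : lam * (inner ℝ (A p) (p - z) : ℝ) ≤ 0 := by
    have e : (inner ℝ ((p - lam • A p) - p) (z - p) : ℝ)
        = lam * (inner ℝ (A p) (p - z) : ℝ) := by
      rw [show (p - lam • A p) - p = -(lam • A p) by abel, inner_neg_left,
        real_inner_smul_left, show z - p = -(p - z) by abel, inner_neg_right]
      ring
    rw [e] at h2
    exact h2
  have h1' : (inner ℝ (u - z) (p - z) : ℝ) - lam * (inner ℝ (A u) (p - z) : ℝ) ≤ 0 := by
    rw [show (u - lam • A u) - z = (u - z) - lam • A u by abel, inner_sub_left,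
      real_inner_smul_left] at h1
    linarith
  have e_ip : (inner ℝ (u - z) (p - z) : ℝ) = ‖u - z‖ ^ 2 - (inner ℝ (u - p) (u - z) : ℝ) := by
    rw [show p - z = (u - z) - (u - p) by abel, inner_sub_right,
      real_inner_self_eq_norm_sq, real_inner_comm]
  have e_Au : (inner ℝ (A u) (p - z) : ℝ)
      = (inner ℝ (A p) (p - z) : ℝ)
        - (inner ℝ (A u - A p) (u - p) : ℝ) + (inner ℝ (A u - A p) (u - z) : ℝ) := by
    simp only [inner_sub_left, inner_sub_right]
    ring
  have hl3 : lam * (inner ℝ (A u - A p) (u - p) : ℝ) ≥ lam * (α * ‖A u - A p‖ ^ 2) :=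
    mul_le_mul_of_nonneg_left h3 hl0.le
  have hl4 : lam * (inner ℝ (A u - A p) (u - z) : ℝ) ≤ lam * (‖A u - A p‖ * ‖u - z‖) :=
    mul_le_mul_of_nonneg_left h4 hl0.le
  have hnn : 0 ≤ lam * (α * ‖A u - A p‖ ^ 2) := by positivity
  rw [hexp]
  nlinarith [h1', e_ip, e_Au, h2', hl3, hl4, hnn]
end

section
/- Let H be a real Hilbert space, C ⊆ H nonempty, G : C × C → ℝ a monotone bifunction (G(x,y) + G(y,x) ≤ 0 for all x, y ∈ C), φ : C → ℝ a function, B : C → H a mapping, and r, s > 0. Suppose u, v ∈ C and x, z ∈ H satisfy: G(u,y) + φ(y) − φ(u) + ⟨Bx, y − u⟩ + (1/r)⟨y − u, u − x⟩ ≥ 0 for all y ∈ C, and G(v,y) + φ(y) − φ(v) + ⟨Bz, y − v⟩ + (1/s)⟨y − v, v − z⟩ ≥ 0 for all y ∈ C. Then ⟨Bz − Bx, u − v⟩ + ⟨u − v, (v − z)/s − (u − x)/r⟩ ≥ 0. -/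
theorem stmt_9 {H : Type*} [NormedAddCommGroup H] [InnerProductSpace ℝ H]
    (C : Set H) (hC : C.Nonempty)
    (G : H → H → ℝ) (hG : ∀ x ∈ C, ∀ y ∈ C, G x y + G y x ≤ 0)
    (φ : H → ℝ) (B : H → H) (r s : ℝ) (hr : 0 < r) (hs : 0 < s)
    (u v : H) (huC : u ∈ C) (hvC : v ∈ C) (x z : H)
    (hu : ∀ y ∈ C, G u y + φ y - φ u + (inner ℝ (B x) (y - u) : ℝ)
            + (1 / r) * (inner ℝ (y - u) (u - x) : ℝ) ≥ 0)
    (hv : ∀ y ∈ C, G v y + φ y - φ v + (inner ℝ (B z) (y - v) : ℝ)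
            + (1 / s) * (inner ℝ (y - v) (v - z) : ℝ) ≥ 0) :
    (inner ℝ (B z - B x) (u - v) : ℝ)
      + (inner ℝ (u - v) ((1 / s) • (v - z) - (1 / r) • (u - x)) : ℝ) ≥ 0 := by
  have h1 := hu v hvC
  have h2 := hv u huC
  have h3 := hG u huC v hvC
  simp only [inner_sub_left, inner_sub_right, real_inner_smul_right,
    inner_neg_left, inner_neg_right] at h1 h2 ⊢
  nlinarith [real_inner_comm u (v - z), real_inner_comm v (v - z),
    real_inner_comm u (u - x), real_inner_comm v (u - x),
    real_inner_comm (v - u) (u - x), real_inner_comm (u - v) (v - z)]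
end
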